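/- At the zeros s₁,₂ of the averaged system (h₁, h₂, h₃) from the zero-Hopf bifurcation at p±, the determinant of the Jacobian of (h₁,h₂,h₃) equals a₁²b₁(4c² - 3ce + 3ω²)/(2ω⁵); in particular it is nonzero when a₁ ≠ 0 and b₁(4c² - 3ce + 3ω²) < 0. -/

import Mathlib

lemma dq (a b c x : ℝ) : deriv (fun t => a * t ^ 2 + b * t + c) x = 2 * a * x + b := by
  have h := ((((hasDerivAt_pow 2 x).const_mul a).add ((hasDerivAt_id x).const_mul b)).add_const c).deriv
  simp only [id_eq] at h
  rw [show (fun t : ℝ => a * t ^ 2 + b * t + c) = (fun x => a * x ^ 2 + b * x) + fun _ => c from rfl] at *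
  exact h.trans (by push_cast; ring)

/-- At the zeros `s₁,₂` of the averaged system from the zero-Hopf bifurcation at `p±`,
the Jacobian determinant equals `a₁²b₁(4c² - 3ce + 3ω²)/(2ω⁵)`, nonzero when `a₁ ≠ 0` and
`b₁(4c² - 3ce + 3ω²) < 0`. -/
theorem averaged_system_ppm_jacobian_s12
    (ω c e a₁ b₁ : ℝ) (hω : 0 < ω) (hc : c ≠ 0) (ha₁ : 0 < a₁)
    (hκ : b₁ * (4 * c ^ 2 - 3 * c * e + 3 * ω ^ 2) < 0) :
    let h₁ : ℝ → ℝ → ℝ → ℝ := fun r z w =>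
      -(r * (2 * c ^ 2 * w + a₁ * ω ^ 2)) / (2 * ω ^ 3)
    let h₂ : ℝ → ℝ → ℝ → ℝ := fun r z w => 2 * c ^ 2 * w * z / ω ^ 3
    let h₃ : ℝ → ℝ → ℝ → ℝ := fun r z w =>
      (24 * c ^ 4 * z ^ 2
        + c * (4 * c ^ 3 * r ^ 2 - 12 * b₁ * c * w + 9 * b₁ * e * w) * ω ^ 2
        + (4 * c ^ 2 * r ^ 2 - 9 * b₁ * w) * ω ^ 4) / (6 * ω ^ 5)
    let z₀ : ℝ := 0
    let w₀ : ℝ := -(a₁ * ω ^ 2) / (2 * c ^ 2)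
    ∀ r₀ : ℝ,
      (r₀ = 1 / (2 * c ^ 2) * Real.sqrt (3 / 2) * Real.sqrt a₁ * ω
          * Real.sqrt (b₁ * (3 * c * e - 4 * c ^ 2 - 3 * ω ^ 2) / (c ^ 2 + ω ^ 2)) ∨
       r₀ = -(1 / (2 * c ^ 2) * Real.sqrt (3 / 2) * Real.sqrt a₁ * ω
          * Real.sqrt (b₁ * (3 * c * e - 4 * c ^ 2 - 3 * ω ^ 2) / (c ^ 2 + ω ^ 2)))) →
      (Matrix.det
          !![deriv (fun r => h₁ r z₀ w₀) r₀, deriv (fun z => h₁ r₀ z w₀) z₀,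
              deriv (fun w => h₁ r₀ z₀ w) w₀;
             deriv (fun r => h₂ r z₀ w₀) r₀, deriv (fun z => h₂ r₀ z w₀) z₀,
              deriv (fun w => h₂ r₀ z₀ w) w₀;
             deriv (fun r => h₃ r z₀ w₀) r₀, deriv (fun z => h₃ r₀ z w₀) z₀,
              deriv (fun w => h₃ r₀ z₀ w) w₀] =
        a₁ ^ 2 * b₁ * (4 * c ^ 2 - 3 * c * e + 3 * ω ^ 2) / (2 * ω ^ 5)) ∧
      (a₁ ≠ 0 → b₁ * (4 * c ^ 2 - 3 * c * e + 3 * ω ^ 2) < 0 →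
        Matrix.det
          !![deriv (fun r => h₁ r z₀ w₀) r₀, deriv (fun z => h₁ r₀ z w₀) z₀,
              deriv (fun w => h₁ r₀ z₀ w) w₀;
             deriv (fun r => h₂ r z₀ w₀) r₀, deriv (fun z => h₂ r₀ z w₀) z₀,
              deriv (fun w => h₂ r₀ z₀ w) w₀;
             deriv (fun r => h₃ r z₀ w₀) r₀, deriv (fun z => h₃ r₀ z w₀) z₀,
              deriv (fun w => h₃ r₀ z₀ w) w₀] ≠ 0) := by
  intro h₁ h₂ h₃ z₀ w₀ r₀ hr₀
  have hω' : ω ≠ 0 := hω.ne'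
  have hcw : c ^ 2 + ω ^ 2 ≠ 0 := by positivity
  have hk : 0 ≤ b₁ * (3 * c * e - 4 * c ^ 2 - 3 * ω ^ 2) / (c ^ 2 + ω ^ 2) := by
    apply div_nonneg
    · nlinarith
    · positivity
  have hr2 : r₀ ^ 2 = (1 / (2 * c ^ 2)) ^ 2 * (3 / 2) * a₁ * ω ^ 2
      * (b₁ * (3 * c * e - 4 * c ^ 2 - 3 * ω ^ 2) / (c ^ 2 + ω ^ 2)) := by
    rcases hr₀ with h | h
    · rw [h, mul_pow, mul_pow, mul_pow, mul_pow, Real.sq_sqrt hk, Real.sq_sqrt ha₁.le,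
        Real.sq_sqrt (by norm_num : (0:ℝ) ≤ 3 / 2)]
    · rw [h, neg_sq, mul_pow, mul_pow, mul_pow, mul_pow, Real.sq_sqrt hk, Real.sq_sqrt ha₁.le,
        Real.sq_sqrt (by norm_num : (0:ℝ) ≤ 3 / 2)]
  have d11 : deriv (fun r => h₁ r z₀ w₀) r₀ = 0 := by
    show deriv (fun r : ℝ => -(r * (2 * c ^ 2 * (-(a₁ * ω ^ 2) / (2 * c ^ 2)) + a₁ * ω ^ 2)) / (2 * ω ^ 3)) r₀ = 0
    rw [show (fun r : ℝ => -(r * (2 * c ^ 2 * (-(a₁ * ω ^ 2) / (2 * c ^ 2)) + a₁ * ω ^ 2)) / (2 * ω ^ 3))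
        = fun t => (0:ℝ) * t ^ 2 + (-(2 * c ^ 2 * (-(a₁ * ω ^ 2) / (2 * c ^ 2)) + a₁ * ω ^ 2) / (2 * ω ^ 3)) * t + 0
      from funext fun t => by ring, dq]
    field_simp; ring
  have d12 : deriv (fun z => h₁ r₀ z w₀) z₀ = 0 := by
    show deriv (fun _ : ℝ => -(r₀ * (2 * c ^ 2 * (-(a₁ * ω ^ 2) / (2 * c ^ 2)) + a₁ * ω ^ 2)) / (2 * ω ^ 3)) (0:ℝ) = 0
    exact deriv_const _ _
  have d13 : deriv (fun w => h₁ r₀ z₀ w) w₀ = -(c ^ 2 * r₀) / ω ^ 3 := by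
    show deriv (fun w : ℝ => -(r₀ * (2 * c ^ 2 * w + a₁ * ω ^ 2)) / (2 * ω ^ 3)) w₀ = -(c ^ 2 * r₀) / ω ^ 3
    rw [show (fun w : ℝ => -(r₀ * (2 * c ^ 2 * w + a₁ * ω ^ 2)) / (2 * ω ^ 3))
        = fun t => (0:ℝ) * t ^ 2 + (-(r₀ * (2 * c ^ 2)) / (2 * ω ^ 3)) * t + (-(r₀ * (a₁ * ω ^ 2)) / (2 * ω ^ 3))
      from funext fun t => by ring, dq]
    field_simp; ring
  have d21 : deriv (fun r => h₂ r z₀ w₀) r₀ = 0 := by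
    show deriv (fun _ : ℝ => 2 * c ^ 2 * (-(a₁ * ω ^ 2) / (2 * c ^ 2)) * (0:ℝ) / ω ^ 3) r₀ = 0
    exact deriv_const _ _
  have d22 : deriv (fun z => h₂ r₀ z w₀) z₀ = -a₁ / ω := by
    show deriv (fun z : ℝ => 2 * c ^ 2 * (-(a₁ * ω ^ 2) / (2 * c ^ 2)) * z / ω ^ 3) (0:ℝ) = -a₁ / ω
    rw [show (fun z : ℝ => 2 * c ^ 2 * (-(a₁ * ω ^ 2) / (2 * c ^ 2)) * z / ω ^ 3)
        = fun t => (0:ℝ) * t ^ 2 + (2 * c ^ 2 * (-(a₁ * ω ^ 2) / (2 * c ^ 2)) / ω ^ 3) * t + 0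
      from funext fun t => by ring, dq]
    field_simp; ring
  have d23 : deriv (fun w => h₂ r₀ z₀ w) w₀ = 0 := by
    show deriv (fun w : ℝ => 2 * c ^ 2 * w * (0:ℝ) / ω ^ 3) w₀ = 0
    rw [show (fun w : ℝ => 2 * c ^ 2 * w * (0:ℝ) / ω ^ 3)
        = fun t => (0:ℝ) * t ^ 2 + (0:ℝ) * t + 0 from funext fun t => by ring, dq]
    ring
  have d31 : deriv (fun r => h₃ r z₀ w₀) r₀ = 4 * c ^ 2 * (c ^ 2 + ω ^ 2) * r₀ / (3 * ω ^ 3) := by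
    show deriv (fun r : ℝ => (24 * c ^ 4 * (0:ℝ) ^ 2
        + c * (4 * c ^ 3 * r ^ 2 - 12 * b₁ * c * (-(a₁ * ω ^ 2) / (2 * c ^ 2)) + 9 * b₁ * e * (-(a₁ * ω ^ 2) / (2 * c ^ 2))) * ω ^ 2
        + (4 * c ^ 2 * r ^ 2 - 9 * b₁ * (-(a₁ * ω ^ 2) / (2 * c ^ 2))) * ω ^ 4) / (6 * ω ^ 5)) r₀
      = 4 * c ^ 2 * (c ^ 2 + ω ^ 2) * r₀ / (3 * ω ^ 3)
    rw [show (fun r : ℝ => (24 * c ^ 4 * (0:ℝ) ^ 2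
        + c * (4 * c ^ 3 * r ^ 2 - 12 * b₁ * c * (-(a₁ * ω ^ 2) / (2 * c ^ 2)) + 9 * b₁ * e * (-(a₁ * ω ^ 2) / (2 * c ^ 2))) * ω ^ 2
        + (4 * c ^ 2 * r ^ 2 - 9 * b₁ * (-(a₁ * ω ^ 2) / (2 * c ^ 2))) * ω ^ 4) / (6 * ω ^ 5))
        = fun t => ((4 * c ^ 4 * ω ^ 2 + 4 * c ^ 2 * ω ^ 4) / (6 * ω ^ 5)) * t ^ 2 + (0:ℝ) * t
          + ((c * (-12 * b₁ * c * (-(a₁ * ω ^ 2) / (2 * c ^ 2)) + 9 * b₁ * e * (-(a₁ * ω ^ 2) / (2 * c ^ 2))) * ω ^ 2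
            + (-9 * b₁ * (-(a₁ * ω ^ 2) / (2 * c ^ 2))) * ω ^ 4) / (6 * ω ^ 5))
      from funext fun t => by ring, dq]
    field_simp; ring
  have d32 : deriv (fun z => h₃ r₀ z w₀) z₀ = 0 := by
    show deriv (fun z : ℝ => (24 * c ^ 4 * z ^ 2
        + c * (4 * c ^ 3 * r₀ ^ 2 - 12 * b₁ * c * (-(a₁ * ω ^ 2) / (2 * c ^ 2)) + 9 * b₁ * e * (-(a₁ * ω ^ 2) / (2 * c ^ 2))) * ω ^ 2
        + (4 * c ^ 2 * r₀ ^ 2 - 9 * b₁ * (-(a₁ * ω ^ 2) / (2 * c ^ 2))) * ω ^ 4) / (6 * ω ^ 5)) (0:ℝ) = 0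
    rw [show (fun z : ℝ => (24 * c ^ 4 * z ^ 2
        + c * (4 * c ^ 3 * r₀ ^ 2 - 12 * b₁ * c * (-(a₁ * ω ^ 2) / (2 * c ^ 2)) + 9 * b₁ * e * (-(a₁ * ω ^ 2) / (2 * c ^ 2))) * ω ^ 2
        + (4 * c ^ 2 * r₀ ^ 2 - 9 * b₁ * (-(a₁ * ω ^ 2) / (2 * c ^ 2))) * ω ^ 4) / (6 * ω ^ 5))
        = fun t => (24 * c ^ 4 / (6 * ω ^ 5)) * t ^ 2 + (0:ℝ) * t
          + ((c * (4 * c ^ 3 * r₀ ^ 2 - 12 * b₁ * c * (-(a₁ * ω ^ 2) / (2 * c ^ 2)) + 9 * b₁ * e * (-(a₁ * ω ^ 2) / (2 * c ^ 2))) * ω ^ 2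
            + (4 * c ^ 2 * r₀ ^ 2 - 9 * b₁ * (-(a₁ * ω ^ 2) / (2 * c ^ 2))) * ω ^ 4) / (6 * ω ^ 5))
      from funext fun t => by ring, dq]
    ring
  have d33 : deriv (fun w => h₃ r₀ z₀ w) w₀
      = (9 * b₁ * c * e - 12 * b₁ * c ^ 2 - 9 * b₁ * ω ^ 2) / (6 * ω ^ 3) := by
    show deriv (fun w : ℝ => (24 * c ^ 4 * (0:ℝ) ^ 2
        + c * (4 * c ^ 3 * r₀ ^ 2 - 12 * b₁ * c * w + 9 * b₁ * e * w) * ω ^ 2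
        + (4 * c ^ 2 * r₀ ^ 2 - 9 * b₁ * w) * ω ^ 4) / (6 * ω ^ 5)) w₀
      = (9 * b₁ * c * e - 12 * b₁ * c ^ 2 - 9 * b₁ * ω ^ 2) / (6 * ω ^ 3)
    rw [show (fun w : ℝ => (24 * c ^ 4 * (0:ℝ) ^ 2
        + c * (4 * c ^ 3 * r₀ ^ 2 - 12 * b₁ * c * w + 9 * b₁ * e * w) * ω ^ 2
        + (4 * c ^ 2 * r₀ ^ 2 - 9 * b₁ * w) * ω ^ 4) / (6 * ω ^ 5))
        = fun t => (0:ℝ) * t ^ 2 + ((c * (-12 * b₁ * c + 9 * b₁ * e) * ω ^ 2 - 9 * b₁ * ω ^ 4) / (6 * ω ^ 5)) * t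
          + ((c * (4 * c ^ 3 * r₀ ^ 2) * ω ^ 2 + 4 * c ^ 2 * r₀ ^ 2 * ω ^ 4) / (6 * ω ^ 5))
      from funext fun t => by ring, dq]
    field_simp; ring
  have key : Matrix.det
          !![deriv (fun r => h₁ r z₀ w₀) r₀, deriv (fun z => h₁ r₀ z w₀) z₀,
              deriv (fun w => h₁ r₀ z₀ w) w₀;
             deriv (fun r => h₂ r z₀ w₀) r₀, deriv (fun z => h₂ r₀ z w₀) z₀,
              deriv (fun w => h₂ r₀ z₀ w) w₀;
             deriv (fun r => h₃ r z₀ w₀) r₀, deriv (fun z => h₃ r₀ z w₀) z₀,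
              deriv (fun w => h₃ r₀ z₀ w) w₀] =
        a₁ ^ 2 * b₁ * (4 * c ^ 2 - 3 * c * e + 3 * ω ^ 2) / (2 * ω ^ 5) := by
    simp only [Matrix.det_fin_three, Matrix.cons_val', Matrix.cons_val_zero, Matrix.empty_val',
      Matrix.cons_val_fin_one, Matrix.cons_val_one, Matrix.head_cons, Matrix.head_fin_const,
      Matrix.cons_val_two, Matrix.tail_cons, Matrix.of_apply, d11, d12, d13, d21, d22, d23,
      d31, d32, d33]
    trans (-(4 * c ^ 4 * a₁ * (c ^ 2 + ω ^ 2)) / (3 * ω ^ 7) * r₀ ^ 2)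
    · ring
    · rw [hr2]; field_simp; ring
  refine ⟨key, fun ha hb => ?_⟩
  rw [key]
  apply div_ne_zero
  · rw [mul_assoc]
    exact mul_ne_zero (pow_ne_zero 2 ha) (ne_of_lt hb)
  · positivity
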